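/- For σ > 0 and c ∈ ℝ, ∫_{0}^{∞} Δ Φ((c−Δ)/σ) dΔ = (1/2)[(σ² + c²) Φ(c/σ) + σc e^{−c²/(2σ²)}/√(2π)]. -/

import Mathlib

open Real MeasureTheory Set Filter Topology

/-- The standard normal cumulative distribution function. -/
noncomputable def Phi (x : ℝ) : ℝ :=
  ∫ t in Set.Iic x, Real.exp (-t^2 / 2) / Real.sqrt (2 * π)

noncomputable def npdf (x : ℝ) : ℝ := Real.exp (-x^2 / 2) / Real.sqrt (2 * π)

lemma Phi_def (x : ℝ) : Phi x = ∫ t in Set.Iic x, npdf t := rfl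

lemma npdf_nonneg (x : ℝ) : 0 ≤ npdf x := div_nonneg (exp_nonneg _) (Real.sqrt_nonneg _)

lemma npdf_cont : Continuous npdf := by unfold npdf; fun_prop

lemma npdf_integrable : Integrable npdf := by
  have h := (integrable_exp_neg_mul_sq (b := (1/2 : ℝ)) (by norm_num)).div_const
    (Real.sqrt (2 * π))
  have : npdf = fun x => Real.exp (-(1/2) * x^2) / Real.sqrt (2 * π) := by
    funext x; unfold npdf; ring_nf
  rw [this]; exact h

lemma hasDerivAt_npdf (x : ℝ) : HasDerivAt npdf (-x * npdf x) x := by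
  have h1 : HasDerivAt (fun x : ℝ => -x^2/2) (-x) x := by
    have := ((hasDerivAt_pow 2 x).neg.div_const 2)
    exact this.congr_deriv (by push_cast; ring)
  have h2 := h1.exp.div_const (Real.sqrt (2*π))
  exact h2.congr_deriv (by unfold npdf; ring)

lemma hasDerivAt_Phi (x : ℝ) : HasDerivAt Phi (npdf x) x := by
  have key : Phi = fun y => Phi 0 + ∫ t in (0:ℝ)..y, npdf t := by
    funext y
    have := intervalIntegral.integral_Iic_sub_Iic (μ := volume)
      (npdf_integrable.integrableOn (s := Iic (0:ℝ)))
      (npdf_integrable.integrableOn (s := Iic y))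
    rw [Phi_def, Phi_def, ← this]; ring
  rw [key]
  exact ((intervalIntegral.integral_hasDerivAt_right
    npdf_integrable.intervalIntegrable
    (npdf_cont.stronglyMeasurableAtFilter _ _)
    npdf_cont.continuousAt).const_add _)

lemma Phi_nonneg (x : ℝ) : 0 ≤ Phi x :=
  setIntegral_nonneg measurableSet_Iic (fun t _ => npdf_nonneg t)

lemma Phi_le_exp {u : ℝ} (hu : u ≤ -2) : Phi u ≤ Real.exp u := by
  have h2π : 1 ≤ Real.sqrt (2*π) := by
    rw [show (1:ℝ) = Real.sqrt 1 by simp]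
    apply Real.sqrt_le_sqrt; nlinarith [pi_gt_three]
  have h1 : Phi u ≤ ∫ t in Iic u, Real.exp t := by
    rw [Phi_def]
    apply setIntegral_mono_on npdf_integrable.integrableOn (integrableOn_exp_Iic u)
      measurableSet_Iic
    intro t ht
    simp only [mem_Iic] at ht
    have ht2 : t ≤ -2 := le_trans ht hu
    unfold npdf
    calc Real.exp (-t^2/2) / Real.sqrt (2*π) ≤ Real.exp (-t^2/2) :=
          div_le_self (exp_nonneg _) h2π
      _ ≤ Real.exp t := by
          apply Real.exp_le_exp.2
          nlinarith [mul_nonneg (by linarith : (0:ℝ) ≤ -t) (by linarith : (0:ℝ) ≤ -(t+2))]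
  rwa [integral_exp_Iic] at h1

lemma npdf_le_exp {x : ℝ} (hx : 2 ≤ x) : npdf x ≤ Real.exp (-x) := by
  have h2π : 1 ≤ Real.sqrt (2*π) := by
    rw [show (1:ℝ) = Real.sqrt 1 by simp]
    apply Real.sqrt_le_sqrt; nlinarith [pi_gt_three]
  unfold npdf
  calc Real.exp (-x^2/2) / Real.sqrt (2*π) ≤ Real.exp (-x^2/2) :=
        div_le_self (exp_nonneg _) h2π
    _ ≤ Real.exp (-x) := by
        apply Real.exp_le_exp.2; nlinarith

lemma Phi_tendsto_atBot : Tendsto Phi atBot (𝓝 0) := by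
  apply tendsto_of_tendsto_of_tendsto_of_le_of_le' tendsto_const_nhds Real.tendsto_exp_atBot
  · exact Eventually.of_forall (fun x => Phi_nonneg x)
  · filter_upwards [eventually_le_atBot (-2:ℝ)] with x hx using Phi_le_exp hx

lemma exp_neg_tendsto : Tendsto (fun x : ℝ => Real.exp (-x)) atTop (𝓝 0) :=
  Real.tendsto_exp_atBot.comp tendsto_neg_atTop_atBot

lemma npdf_tendsto_atTop : Tendsto npdf atTop (𝓝 0) := by
  apply tendsto_of_tendsto_of_tendsto_of_le_of_le' tendsto_const_nhds exp_neg_tendsto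
  · exact Eventually.of_forall (fun x => npdf_nonneg x)
  · filter_upwards [eventually_ge_atTop (2:ℝ)] with x hx using npdf_le_exp hx

lemma npdf_neg (x : ℝ) : npdf (-x) = npdf x := by unfold npdf; ring_nf

lemma npdf_tendsto_atBot : Tendsto npdf atBot (𝓝 0) := by
  have := npdf_tendsto_atTop.comp tendsto_neg_atBot_atTop
  refine this.congr (fun x => ?_)
  simp [Function.comp, npdf_neg]

lemma mul_npdf_tendsto_atTop : Tendsto (fun x : ℝ => x * npdf x) atTop (𝓝 0) := by
  have h1 : Tendsto (fun x : ℝ => x * Real.exp (-x)) atTop (𝓝 0) := by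
    have := tendsto_pow_mul_exp_neg_atTop_nhds_zero 1
    simpa using this
  apply tendsto_of_tendsto_of_tendsto_of_le_of_le' tendsto_const_nhds h1
  · filter_upwards [eventually_ge_atTop (0:ℝ)] with x hx
    exact mul_nonneg hx (npdf_nonneg x)
  · filter_upwards [eventually_ge_atTop (2:ℝ)] with x hx
    exact mul_le_mul_of_nonneg_left (npdf_le_exp hx) (by linarith)

lemma mul_npdf_tendsto_atBot : Tendsto (fun x : ℝ => x * npdf x) atBot (𝓝 0) := by
  have := (mul_npdf_tendsto_atTop.comp tendsto_neg_atBot_atTop).neg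
  rw [neg_zero] at this
  refine this.congr (fun x => ?_)
  simp [Function.comp, npdf_neg]

theorem integral_mul_Phi (σ c : ℝ) (hσ : 0 < σ) :
    (∫ Δ in Set.Ici (0:ℝ), Δ * Phi ((c - Δ) / σ))
      = (1/2) * ((σ^2 + c^2) * Phi (c / σ)
          + σ * c * Real.exp (-c^2 / (2 * σ^2)) / Real.sqrt (2 * π)) := by
  have hσ' : σ ≠ 0 := hσ.ne'
  set F : ℝ → ℝ := fun Δ => (Δ^2/2) * Phi ((c - Δ)/σ)
    - (1/2)*((σ^2+c^2)*Phi ((c - Δ)/σ) + 2*c*σ*npdf ((c - Δ)/σ)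
        - σ^2*((c - Δ)/σ)*npdf ((c - Δ)/σ)) with hF
  -- derivative
  have hderiv : ∀ Δ : ℝ, HasDerivAt F (Δ * Phi ((c - Δ)/σ)) Δ := by
    intro Δ
    have hu' : HasDerivAt (fun Δ : ℝ => (c - Δ)/σ) (-1/σ) Δ := by
      have := ((hasDerivAt_id Δ).const_sub c).div_const σ
      simpa using this
    have hPhiu : HasDerivAt (fun Δ : ℝ => Phi ((c - Δ)/σ)) (npdf ((c - Δ)/σ) * (-1/σ)) Δ :=
      (hasDerivAt_Phi _).comp Δ hu'
    have hnu : HasDerivAt (fun Δ : ℝ => npdf ((c - Δ)/σ))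
        ((-((c - Δ)/σ) * npdf ((c - Δ)/σ)) * (-1/σ)) Δ :=
      (hasDerivAt_npdf _).comp Δ hu'
    have huu : HasDerivAt (fun Δ : ℝ => ((c - Δ)/σ) * npdf ((c - Δ)/σ))
        ((-1/σ) * npdf ((c - Δ)/σ)
          + ((c - Δ)/σ) * ((-((c - Δ)/σ) * npdf ((c - Δ)/σ)) * (-1/σ))) Δ :=
      hu'.mul hnu
    have h1 : HasDerivAt (fun Δ : ℝ => (Δ^2/2) * Phi ((c - Δ)/σ))
        ((Δ : ℝ) * Phi ((c - Δ)/σ) + (Δ^2/2) * (npdf ((c - Δ)/σ) * (-1/σ))) Δ := by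
      have hp : HasDerivAt (fun Δ : ℝ => Δ^2/2) Δ Δ := by
        have := (hasDerivAt_pow 2 Δ).div_const 2
        exact this.congr_deriv (by push_cast; ring)
      exact hp.mul hPhiu
    have h2 := ((hPhiu.const_mul (σ^2+c^2)).add (hnu.const_mul (2*c*σ))).sub
      (huu.const_mul (σ^2))
    have := h1.sub (h2.const_mul (1/2))
    have hFeq : (fun x : ℝ => x^2/2 * Phi ((c - x)/σ)
        - 1/2*((σ^2+c^2)*Phi ((c - x)/σ) + 2*c*σ*npdf ((c - x)/σ)
          - σ^2*((c - x)/σ * npdf ((c - x)/σ)))) = F := by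
      funext x; rw [hF]; ring
    simp only [Pi.sub_def, Pi.add_def] at this
    rw [hFeq] at this
    refine this.congr_deriv ?_
    obtain ⟨v, hv⟩ : ∃ v, (c - Δ)/σ = v := ⟨_, rfl⟩
    have hΔ : Δ = c - σ * v := by rw [← hv]; field_simp; ring
    rw [hv, hΔ]
    field_simp
    ring
  have hcont : ContinuousWithinAt F (Ici 0) 0 :=
    (hderiv 0).continuousAt.continuousWithinAt
  have hnonneg : ∀ Δ ∈ Ioi (0:ℝ), 0 ≤ Δ * Phi ((c - Δ)/σ) := by
    intro Δ hΔ
    exact mul_nonneg (le_of_lt hΔ) (Phi_nonneg _)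
  -- limit at infinity
  have htu : Tendsto (fun Δ : ℝ => (c - Δ)/σ) atTop atBot := by
    apply Tendsto.atBot_div_const hσ
    exact tendsto_atBot_add_const_left _ c tendsto_neg_atTop_atBot
  have hPhi0 : Tendsto (fun Δ : ℝ => Phi ((c - Δ)/σ)) atTop (𝓝 0) :=
    Phi_tendsto_atBot.comp htu
  have hnpdf0 : Tendsto (fun Δ : ℝ => npdf ((c - Δ)/σ)) atTop (𝓝 0) :=
    npdf_tendsto_atBot.comp htu
  have hun0 : Tendsto (fun Δ : ℝ => ((c - Δ)/σ) * npdf ((c - Δ)/σ)) atTop (𝓝 0) :=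
    mul_npdf_tendsto_atBot.comp htu
  have hsq0 : Tendsto (fun Δ : ℝ => Δ^2 * Phi ((c - Δ)/σ)) atTop (𝓝 0) := by
    have hbig : Tendsto (fun Δ : ℝ => Δ^2 * Real.exp ((c - Δ)/σ)) atTop (𝓝 0) := by
      have hdiv : Tendsto (fun Δ : ℝ => Δ/σ) atTop atTop :=
        tendsto_id.atTop_div_const hσ
      have := ((tendsto_pow_mul_exp_neg_atTop_nhds_zero 2).comp hdiv).const_mul
        (Real.exp (c/σ) * σ^2)
      rw [mul_zero] at this
      refine this.congr (fun Δ => ?_)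
      simp only [Function.comp]
      rw [show (c - Δ)/σ = c/σ + -(Δ/σ) by ring, Real.exp_add]
      field_simp
    apply tendsto_of_tendsto_of_tendsto_of_le_of_le' tendsto_const_nhds hbig
    · filter_upwards [eventually_ge_atTop (0:ℝ)] with Δ hΔ
      exact mul_nonneg (by positivity) (Phi_nonneg _)
    · filter_upwards [htu.eventually (eventually_le_atBot (-2:ℝ)),
        eventually_ge_atTop (0:ℝ)] with Δ h1 h2
      exact mul_le_mul_of_nonneg_left (Phi_le_exp h1) (by positivity)
  have hlim : Tendsto F atTop (𝓝 0) := by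
    have := (hsq0.div_const 2).sub
      ((((hPhi0.const_mul (σ^2+c^2)).add (hnpdf0.const_mul (2*c*σ))).sub
        ((hun0.const_mul (σ^2)))).const_mul (1/2))
    have h0 : ((0:ℝ)/2 - 1/2*((σ^2+c^2)*0 + 2*c*σ*0 - σ^2*0)) = 0 := by ring
    rw [show ((σ^2+c^2)*0 + 2*c*σ*0 - σ^2*0 : ℝ) = 0 by ring] at this
    rw [show ((0:ℝ)/2 - 1/2*0) = 0 by ring] at this
    refine this.congr (fun Δ => ?_)
    rw [hF]
    ring
  rw [MeasureTheory.integral_Ici_eq_integral_Ioi]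
  rw [integral_Ioi_of_hasDerivAt_of_nonneg hcont (fun x _ => hderiv x) hnonneg hlim]
  rw [hF]
  have hn : npdf (c/σ) = Real.exp (-c^2/(2*σ^2)) / Real.sqrt (2*π) := by
    unfold npdf
    rw [show -(c/σ)^2/2 = -c^2/(2*σ^2) by rw [div_pow]; field_simp]
  simp only [sub_zero]
  rw [hn]
  field_simp
  ring
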